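/- Let Z : ℝ^n → ℝ^s be continuously differentiable and let M ∈ ℝ^{n×s} be such that the n×n matrix M·Z'(x) is symmetric for every x ∈ ℝ^n, where Z'(x) denotes the Jacobian of Z at x. Define S : ℝ^n → ℝ by S(x) = ∫₀¹ ⟨x, M·Z(t·x)⟩ dt. Then S is differentiable and its gradient satisfies ∇S(x) = M·Z(x) for every x ∈ ℝ^n. -/

import Mathlib

set_option maxHeartbeats 1000000


open Matrix

/-- The continuous linear map `v ↦ a ⬝ᵥ v` on `ℝ^n`. -/
noncomputable def dotCLM {n : ℕ} (a : Fin n → ℝ) : (Fin n → ℝ) →L[ℝ] ℝ :=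
  LinearMap.toContinuousLinearMap
    { toFun := fun v => a ⬝ᵥ v
      map_add' := by intro x y; simp [dotProduct_add]
      map_smul' := by intro c x; simp [dotProduct_smul] }

open MeasureTheory Set

namespace Stmt13Aux

lemma dotCLM_apply {n : ℕ} (a v : Fin n → ℝ) : dotCLM a v = a ⬝ᵥ v := rfl

/-- Dot product as a continuous bilinear map. -/
noncomputable def dotCLM₂ (n : ℕ) : (Fin n → ℝ) →L[ℝ] (Fin n → ℝ) →L[ℝ] ℝ :=
  LinearMap.toContinuousLinearMap
    { toFun := fun a => dotCLM a
      map_add' := by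
        intro a b; ext v; simp [dotCLM_apply, add_dotProduct]
      map_smul' := by
        intro c a; ext v; simp [dotCLM_apply, smul_dotProduct] }

lemma dotCLM₂_apply {n : ℕ} (a v : Fin n → ℝ) : dotCLM₂ n a v = a ⬝ᵥ v := rfl

/-- `M.mulVec` as a continuous linear map. -/
noncomputable def mulVecCLM {n s : ℕ} (M : Matrix (Fin n) (Fin s) ℝ) :
    (Fin s → ℝ) →L[ℝ] (Fin n → ℝ) :=
  LinearMap.toContinuousLinearMap M.mulVecLin

lemma mulVecCLM_apply {n s : ℕ} (M : Matrix (Fin n) (Fin s) ℝ) (v : Fin s → ℝ) :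
    mulVecCLM M v = M.mulVec v := rfl

lemma toMatrix'_mulVec {n s : ℕ} (f : (Fin n → ℝ) →ₗ[ℝ] (Fin s → ℝ)) (w : Fin n → ℝ) :
    (LinearMap.toMatrix' f).mulVec w = f w := by
  rw [← Matrix.toLin'_apply, Matrix.toLin'_toMatrix']

end Stmt13Aux

open Stmt13Aux

/-- Hadamard-lemma-type statement: if `Z` is `C¹` and `M Z'(x)` is symmetric for all `x`,
then `S(x) = ∫₀¹ ⟨x, M Z(t x)⟩ dt` is differentiable with gradient `∇S(x) = M Z(x)`,
i.e. its derivative at `x` is the linear functional `v ↦ ⟨M Z(x), v⟩`. -/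
theorem stmt13 (n s : ℕ)
    (Z : (Fin n → ℝ) → (Fin s → ℝ)) (hZ : ContDiff ℝ 1 Z)
    (M : Matrix (Fin n) (Fin s) ℝ)
    (hsymm : ∀ x : Fin n → ℝ,
      (M * LinearMap.toMatrix' ((fderiv ℝ Z x : (Fin n → ℝ) →L[ℝ] (Fin s → ℝ)) :
        (Fin n → ℝ) →ₗ[ℝ] (Fin s → ℝ))).IsSymm) :
    ∀ x : Fin n → ℝ,
      HasFDerivAt (fun y : Fin n → ℝ => ∫ t in (0:ℝ)..1, y ⬝ᵥ M.mulVec (Z (t • y)))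
        (dotCLM (M.mulVec (Z x))) x := by
  intro x
  have hZd : ∀ p : Fin n → ℝ, HasFDerivAt Z (fderiv ℝ Z p) p := fun p =>
    (hZ.differentiable one_ne_zero p).hasFDerivAt
  have hfdc : Continuous (fderiv ℝ Z) := hZ.continuous_fderiv one_ne_zero
  -- the candidate derivative in `y` of the integrand
  set F' : (Fin n → ℝ) → ℝ → ((Fin n → ℝ) →L[ℝ] ℝ) := fun y t =>
    dotCLM₂ n (M.mulVec (Z (t • y))) +
      t • ((dotCLM₂ n y).comp ((mulVecCLM M).comp (fderiv ℝ Z (t • y)))) with hF'def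
  -- symmetry consequence
  have hsym' : ∀ (p : Fin n → ℝ) (a b : Fin n → ℝ),
      a ⬝ᵥ M.mulVec (fderiv ℝ Z p b) = b ⬝ᵥ M.mulVec (fderiv ℝ Z p a) := by
    intro p a b
    have hA := hsymm p
    have hM : ∀ w : Fin n → ℝ,
        (M * LinearMap.toMatrix' ((fderiv ℝ Z p : (Fin n → ℝ) →L[ℝ] (Fin s → ℝ)) :
          (Fin n → ℝ) →ₗ[ℝ] (Fin s → ℝ))).mulVec w = M.mulVec (fderiv ℝ Z p w) := by
      intro w
      rw [← Matrix.mulVec_mulVec, toMatrix'_mulVec]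
      rfl
    rw [← hM, ← hM, Matrix.dotProduct_mulVec, ← Matrix.mulVec_transpose, hA.eq,
      dotProduct_comm]
  -- differentiability of the integrand in `y`
  have h_diff : ∀ (t : ℝ) (y : Fin n → ℝ),
      HasFDerivAt (fun y : Fin n → ℝ => y ⬝ᵥ M.mulVec (Z (t • y))) (F' y t) y := by
    intro t y
    have hsm : HasFDerivAt (fun y : Fin n → ℝ => t • y)
        (t • ContinuousLinearMap.id ℝ (Fin n → ℝ)) y := (hasFDerivAt_id y).const_smul t
    have hg : HasFDerivAt (fun y : Fin n → ℝ => M.mulVec (Z (t • y)))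
        ((mulVecCLM M).comp ((fderiv ℝ Z (t • y)).comp
          (t • ContinuousLinearMap.id ℝ (Fin n → ℝ)))) y :=
      (mulVecCLM M).hasFDerivAt.comp y (((hZd (t • y)).comp y hsm))
    have h := (dotCLM₂ n).hasFDerivAt_of_bilinear (hasFDerivAt_id y) hg
    have heq : ((dotCLM₂ n).precompR (Fin n → ℝ) y
          ((mulVecCLM M).comp ((fderiv ℝ Z (t • y)).comp
            (t • ContinuousLinearMap.id ℝ (Fin n → ℝ)))) +
        (dotCLM₂ n).precompL (Fin n → ℝ) (ContinuousLinearMap.id ℝ (Fin n → ℝ))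
          (M.mulVec (Z (t • y)))) = F' y t := by
      ext v
      simp only [ContinuousLinearMap.add_apply, ContinuousLinearMap.precompR_apply,
        ContinuousLinearMap.precompL_apply, ContinuousLinearMap.compL_apply,
        ContinuousLinearMap.coe_comp', Function.comp_apply,
        ContinuousLinearMap.smul_apply, ContinuousLinearMap.coe_id', id_eq,
        ContinuousLinearMap.coe_smul', Pi.smul_apply, hF'def,
        dotCLM₂_apply, mulVecCLM_apply]
      rw [_root_.map_smul (fderiv ℝ Z (t • y)), Matrix.mulVec_smul, dotProduct_smul]
      rw [add_comm]
      congr 1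
      exact dotProduct_comm _ _
    simp only [id_eq] at h
    rw [heq] at h
    exact h
  -- continuity of `F'` jointly in `(y, t)`
  have hWc : Continuous fun y : Fin n → ℝ => M.mulVec (Z y) :=
    (mulVecCLM M).continuous.comp hZ.continuous
  have hF'c : Continuous fun p : (Fin n → ℝ) × ℝ => F' p.1 p.2 := by
    apply Continuous.add
    · exact (dotCLM₂ n).continuous.comp (hWc.comp (continuous_snd.smul continuous_fst))
    · exact continuous_snd.smul
        (((dotCLM₂ n).continuous.comp continuous_fst).clm_comp
          (continuous_const.clm_comp (hfdc.comp (continuous_snd.smul continuous_fst))))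
  -- compactness bound
  obtain ⟨p₀, hp₀K, hp₀⟩ :=
    ((isCompact_closedBall x 1).prod (isCompact_Icc (a := (0:ℝ)) (b := 1))).exists_isMaxOn
      ⟨(x, 0), by simp⟩ (hF'c.norm.continuousOn)
  rw [isMaxOn_iff] at hp₀
  set C : ℝ := ‖F' p₀.1 p₀.2‖ with hCdef
  have hC : ∀ y ∈ Metric.closedBall x 1, ∀ t ∈ Icc (0:ℝ) 1, ‖F' y t‖ ≤ C := fun y hy t ht =>
    hp₀ (y, t) (Set.mk_mem_prod hy ht)
  have h_main :
      HasFDerivAt (fun y : Fin n → ℝ => ∫ t in (0:ℝ)..1, y ⬝ᵥ M.mulVec (Z (t • y)))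
        (∫ t in (0:ℝ)..1, F' x t) x := by
    have hcy : ∀ y : Fin n → ℝ, Continuous fun t : ℝ => y ⬝ᵥ M.mulVec (Z (t • y)) := by
      intro y
      have : Continuous fun t : ℝ => (dotCLM₂ n y) (M.mulVec (Z (t • y))) :=
        (dotCLM₂ n y).continuous.comp (hWc.comp (continuous_id.smul continuous_const))
      exact this
    refine hasFDerivAt_integral_of_dominated_of_fderiv_le'' (μ := MeasureTheory.volume)
      (F := fun y t => y ⬝ᵥ M.mulVec (Z (t • y))) (F' := fun y t => F' y t)
      (bound := fun _ => C) (Metric.ball_mem_nhds x one_pos) ?_ ?_ ?_ ?_ ?_ ?_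
    · filter_upwards with y
      exact (hcy y).aestronglyMeasurable
    · exact (hcy x).intervalIntegrable 0 1
    · exact (hF'c.comp (Continuous.prodMk_right x)).aestronglyMeasurable
    · filter_upwards [ae_restrict_mem measurableSet_uIoc] with t ht y hy
      have ht' : t ∈ Icc (0:ℝ) 1 := by
        rw [uIoc_of_le (by norm_num : (0:ℝ) ≤ 1)] at ht
        exact Ioc_subset_Icc_self ht
      exact hC y (Metric.ball_subset_closedBall hy) t ht'
    · exact intervalIntegrable_const
    · filter_upwards with t y _
      exact h_diff t y
  -- identify the derivative with `dotCLM (M.mulVec (Z x))`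
  have hint : (∫ t in (0:ℝ)..1, F' x t) = dotCLM (M.mulVec (Z x)) := by
    have hF'int : IntegrableOn (fun t => F' x t) (Ioc (0:ℝ) 1) volume :=
      (hF'c.comp (Continuous.prodMk_right x)).integrableOn_Ioc
    ext v
    have h1 : (∫ t in (0:ℝ)..1, F' x t) v = ∫ t in (0:ℝ)..1, (F' x t) v := by
      rw [intervalIntegral.integral_of_le (by norm_num : (0:ℝ) ≤ 1),
        intervalIntegral.integral_of_le (by norm_num : (0:ℝ) ≤ 1)]
      exact ContinuousLinearMap.integral_apply hF'int v
    rw [h1]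
    have key : ∀ t : ℝ,
        HasDerivAt (fun t : ℝ => t * (v ⬝ᵥ M.mulVec (Z (t • x)))) ((F' x t) v) t := by
      intro t
      have ht : HasDerivAt (fun t : ℝ => t • x) x t := by
        simpa using (hasDerivAt_id t).smul_const x
      have hZc : HasDerivAt (fun t : ℝ => Z (t • x)) (fderiv ℝ Z (t • x) x) t :=
        (hZd (t • x)).comp_hasDerivAt t ht
      have hC : HasDerivAt (fun t : ℝ => v ⬝ᵥ M.mulVec (Z (t • x)))
          (v ⬝ᵥ M.mulVec (fderiv ℝ Z (t • x) x)) t :=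
        ((dotCLM v).comp (mulVecCLM M)).hasFDerivAt.comp_hasDerivAt t hZc
      have h := (hasDerivAt_id t).mul hC
      have heq : 1 * (v ⬝ᵥ M.mulVec (Z (t • x))) +
          id t * (v ⬝ᵥ M.mulVec (fderiv ℝ Z (t • x) x)) = (F' x t) v := by
        simp only [one_mul, id_eq, hF'def, ContinuousLinearMap.add_apply, dotCLM₂_apply,
          ContinuousLinearMap.smul_apply, ContinuousLinearMap.coe_comp', Function.comp_apply,
          mulVecCLM_apply, smul_eq_mul]
        rw [hsym' (t • x) v x]
        rw [dotProduct_comm]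
      rw [heq] at h
      exact h
    have hcont : Continuous fun t : ℝ => (F' x t) v :=
      (hF'c.comp (Continuous.prodMk_right x)).clm_apply continuous_const
    have := intervalIntegral.integral_eq_sub_of_hasDerivAt
      (fun t _ => key t) (hcont.intervalIntegrable 0 1)
    rw [this]
    simp [dotCLM_apply, dotProduct_comm]
  rw [← hint]
  exact h_main
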